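/- Let μ be a non-atomic Borel probability measure on [0,1]. For every q ≥ 0 and every a ≥ 0, β_a(q) = limsup_{r→0⁺} log( Σ_{B ∈ B_r^*} μ(B)^q ) / (−log r); that is, for nonnegative q the moment function defined via enlarged grid intervals coincides with the usual coarse multifractal moment function β₀(q). -/

import Mathlib

open MeasureTheory Filter Set
open scoped Classical

noncomputable section

/-- The enlargement `B̄^a` of the interval `[s,t]` by the factor `1+a` about its centre. -/
def enlarge (a s t : ℝ) : Set ℝ :=
  Set.Icc (s - a * (t - s) / 2) (t + a * (t - s) / 2)

/-- The moment sum `Σ_{B ∈ B_r^*} μ(B̄^a)^q` over grid intervals of length `r`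
whose interior meets the support of `μ` (i.e. with `μ(B) > 0`). -/
def gridSum (μ : Measure ℝ) (a q R : ℝ) : ℝ :=
  ∑' m : ℤ, if 0 < μ (Set.Icc ((m : ℝ) * R) (((m : ℝ) + 1) * R))
    then (μ (enlarge a ((m : ℝ) * R) (((m : ℝ) + 1) * R))).toReal ^ q else 0

/-- The coarse multifractal moment function
`β_a(q) = inf{β : limsup_{r→0⁺} r^β Σ_{B ∈ B_r^*} μ(B̄^a)^q = 0}`.
(For the nonnegative quantity `r^β · Σ…`, vanishing of the `limsup` as `r → 0⁺`
is the same as convergence to `0`.) -/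
def betaA (μ : Measure ℝ) (a q : ℝ) : ℝ :=
  sInf {β : ℝ | Filter.Tendsto (fun R => R ^ β * gridSum μ a q R)
    (nhdsWithin 0 (Set.Ioi 0)) (nhds 0)}

/-- `F` is a "fractal subset" of `[0,1]`: compact, Lebesgue-null, containing `0` and `1`. -/
def IsFractalSubset (F : Set ℝ) : Prop :=
  IsCompact F ∧ F ⊆ Set.Icc 0 1 ∧ (0 : ℝ) ∈ F ∧ (1 : ℝ) ∈ F ∧ MeasureTheory.volume F = 0

/-- The complementary intervals `I_n = (l n, r n)` of `F` in `[0,1]`, enumerated with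
nonincreasing lengths. -/
structure FractalComplement (F : Set ℝ) where
  l : ℕ → ℝ
  r : ℕ → ℝ
  lt : ∀ n, l n < r n
  disj : Pairwise fun n m => Disjoint (Set.Ioo (l n) (r n)) (Set.Ioo (l m) (r m))
  union : (⋃ n, Set.Ioo (l n) (r n)) = Set.Icc (0 : ℝ) 1 \ F
  mono : ∀ n, r (n + 1) - l (n + 1) ≤ r n - l n

/-- The length `|I_n|` of the `n`-th complementary interval. -/
def FractalComplement.len {F : Set ℝ} (c : FractalComplement F) (n : ℕ) : ℝ := c.r n - c.l n

/-- The enlargement `Ī_n^a` of the closure of the complementary interval `I_n`. -/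
def FractalComplement.I {F : Set ℝ} (c : FractalComplement F) (a : ℝ) (n : ℕ) : Set ℝ :=
  enlarge a (c.l n) (c.r n)

/-- The lacunarity condition with constant `lam`: every interval `[x-r, x+r]` with `x ∈ F`
and `0 < r ≤ 1` contains a complementary interval of length at least `lam * r`. -/
def Lacunary {F : Set ℝ} (c : FractalComplement F) (lam : ℝ) : Prop :=
  ∀ x ∈ F, ∀ R : ℝ, 0 < R → R ≤ 1 → ∃ n,
    Set.Ioo (c.l n) (c.r n) ⊆ Set.Icc (x - R) (x + R) ∧ lam * R ≤ c.len n

/-- The topological support of `μ` is exactly `F`. -/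
def HasSupport (μ : Measure ℝ) (F : Set ℝ) : Prop :=
  μ Fᶜ = 0 ∧ ∀ x ∈ F, ∀ ε : ℝ, 0 < ε → 0 < μ (Set.Ioo (x - ε) (x + ε))

namespace Stmt6Aux

open scoped ENNReal

def box (R : ℝ) (m : ℤ) : Set ℝ := Set.Icc ((m : ℝ) * R) (((m : ℝ) + 1) * R)

def term (μ : Measure ℝ) (a q R : ℝ) (m : ℤ) : ℝ :=
  if 0 < μ (box R m) then (μ (enlarge a ((m : ℝ) * R) (((m : ℝ) + 1) * R))).toReal ^ q else 0

lemma gridSum_eq_tsum (μ : Measure ℝ) (a q R : ℝ) :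
    gridSum μ a q R = ∑' m, term μ a q R m := rfl

def K (R : ℝ) : Finset ℤ := Finset.Icc (-1 : ℤ) ⌊1/R⌋

lemma box_subset_compl {R : ℝ} (hR : 0 < R) {m : ℤ} (hm : m ∉ K R) :
    box R m ⊆ (Set.Icc (0:ℝ) 1)ᶜ := by
  simp only [K, Finset.mem_Icc, not_and_or, not_le] at hm
  intro x hx
  simp only [box, Set.mem_Icc] at hx
  simp only [Set.mem_compl_iff, Set.mem_Icc, not_and_or, not_le]
  rcases hm with hm | hm
  · left
    have h1 : (m : ℝ) + 1 ≤ -1 := by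
      have : (m : ℝ) ≤ -2 := by exact_mod_cast (show m ≤ -2 by omega)
      linarith
    have : ((m : ℝ) + 1) * R ≤ (-1) * R := by
      apply mul_le_mul_of_nonneg_right h1 hR.le
    nlinarith [hx.2]
  · right
    have h1 : 1 / R < (m : ℝ) := Int.floor_lt.mp hm
    have : 1 < (m : ℝ) * R := by
      rw [div_lt_iff₀ hR] at h1; linarith
    linarith [hx.1]

lemma term_eq_zero_of_not_mem {μ : Measure ℝ} (hsupp : μ (Set.Icc (0 : ℝ) 1)ᶜ = 0)
    {R : ℝ} (hR : 0 < R) (a q : ℝ) {m : ℤ} (hm : m ∉ K R) : term μ a q R m = 0 := by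
  have : μ (box R m) = 0 :=
    le_antisymm (le_trans (measure_mono (box_subset_compl hR hm)) hsupp.le) zero_le
  simp [term, this]

lemma term_nonneg (μ : Measure ℝ) (a q R : ℝ) (m : ℤ) : 0 ≤ term μ a q R m := by
  unfold term; split <;> positivity

lemma term_le_one (μ : Measure ℝ) [IsProbabilityMeasure μ] {q : ℝ} (hq : 0 ≤ q)
    (a R : ℝ) (m : ℤ) : term μ a q R m ≤ 1 := by
  unfold term; split
  · apply Real.rpow_le_one ENNReal.toReal_nonneg _ hq
    exact ENNReal.toReal_le_of_le_ofReal one_pos.le (by simpa using prob_le_one)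
  · norm_num

lemma summable_term {μ : Measure ℝ} (hsupp : μ (Set.Icc (0 : ℝ) 1)ᶜ = 0)
    {R : ℝ} (hR : 0 < R) (a q : ℝ) : Summable (term μ a q R) :=
  summable_of_ne_finset_zero (s := K R) fun m hm => term_eq_zero_of_not_mem hsupp hR a q hm

lemma gridSum_eq_sum {μ : Measure ℝ} (hsupp : μ (Set.Icc (0 : ℝ) 1)ᶜ = 0)
    {R : ℝ} (hR : 0 < R) (a q : ℝ) :
    gridSum μ a q R = ∑ m ∈ K R, term μ a q R m :=
  tsum_eq_sum fun m hm => term_eq_zero_of_not_mem hsupp hR a q hm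

lemma gridSum_nonneg (μ : Measure ℝ) (a q R : ℝ) : 0 ≤ gridSum μ a q R :=
  tsum_nonneg (term_nonneg μ a q R)

lemma cardK_le {R : ℝ} (hR : 0 < R) (hR1 : R ≤ 1) : ((K R).card : ℝ) ≤ 3 / R := by
  have h0 : (1:ℝ) ≤ 1 / R := by
    rw [le_div_iff₀ hR]; linarith
  have hfl : (0:ℤ) ≤ ⌊1/R⌋ := Int.floor_nonneg.mpr (by linarith)
  have hcard : ((K R).card : ℝ) = (⌊1/R⌋ : ℝ) + 2 := by
    have : ((K R).card : ℤ) = ⌊1/R⌋ + 2 := by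
      simp only [K, Int.card_Icc]
      omega
    exact_mod_cast this
  rw [hcard]
  have h3 : (⌊1/R⌋ : ℝ) ≤ 1 / R := Int.floor_le _
  have h4 : (2:ℝ) ≤ 2 / R := by rw [le_div_iff₀ hR]; linarith
  have : (1:ℝ)/R + 2/R = 3/R := by ring
  linarith

lemma gridSum_le {μ : Measure ℝ} [IsProbabilityMeasure μ]
    (hsupp : μ (Set.Icc (0 : ℝ) 1)ᶜ = 0) {q : ℝ} (hq : 0 ≤ q) (a : ℝ)
    {R : ℝ} (hR : 0 < R) (hR1 : R ≤ 1) : gridSum μ a q R ≤ 3 / R := by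
  rw [gridSum_eq_sum hsupp hR]
  calc ∑ m ∈ K R, term μ a q R m ≤ ∑ m ∈ K R, 1 :=
        Finset.sum_le_sum fun m _ => term_le_one μ hq a R m
    _ = ((K R).card : ℝ) := by simp
    _ ≤ 3 / R := cardK_le hR hR1


lemma Icc_subset_biUnion {R : ℝ} (hR : 0 < R) (hR1 : R ≤ 1) :
    Set.Icc (0:ℝ) 1 ⊆ ⋃ m ∈ K R, box R m := by
  intro x hx
  obtain ⟨hx0, hx1⟩ := hx
  refine Set.mem_biUnion (show ⌊x/R⌋ ∈ K R from ?_) ?_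
  · simp only [K, Finset.mem_Icc]
    constructor
    · have : (0:ℤ) ≤ ⌊x/R⌋ := Int.floor_nonneg.mpr (div_nonneg hx0 hR.le)
      omega
    · exact Int.floor_le_floor (by gcongr)
  · constructor
    · have := Int.floor_le (x/R)
      calc (⌊x/R⌋ : ℝ) * R ≤ (x/R) * R := by
            apply mul_le_mul_of_nonneg_right this hR.le
        _ = x := by field_simp
    · have := Int.lt_floor_add_one (x/R)
      have h2 : x / R * R < ((⌊x/R⌋:ℝ) + 1) * R := by
        apply mul_lt_mul_of_pos_right this hR
      calc x = x / R * R := by field_simp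
        _ ≤ ((⌊x/R⌋:ℝ) + 1) * R := h2.le

lemma one_le_sum_box {μ : Measure ℝ} [IsProbabilityMeasure μ]
    (hsupp : μ (Set.Icc (0 : ℝ) 1)ᶜ = 0) {R : ℝ} (hR : 0 < R) (hR1 : R ≤ 1) :
    (1:ℝ) ≤ ∑ m ∈ K R, (μ (box R m)).toReal := by
  have h1 : (1:ℝ≥0∞) ≤ μ (Set.Icc (0:ℝ) 1) := by
    have : μ Set.univ ≤ μ (Set.Icc (0:ℝ) 1) + μ (Set.Icc (0:ℝ) 1)ᶜ := by
      rw [← Set.union_compl_self (Set.Icc (0:ℝ) 1)]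
      exact measure_union_le _ _
    simpa [hsupp] using this
  have h2 : μ (Set.Icc (0:ℝ) 1) ≤ ∑ m ∈ K R, μ (box R m) :=
    le_trans (measure_mono (Icc_subset_biUnion hR hR1)) (measure_biUnion_finset_le _ _)
  have h3 : (1:ℝ≥0∞) ≤ ∑ m ∈ K R, μ (box R m) := h1.trans h2
  have h4 : (∑ m ∈ K R, μ (box R m)).toReal = ∑ m ∈ K R, (μ (box R m)).toReal :=
    ENNReal.toReal_sum fun m _ => measure_ne_top μ _
  have h5 : (∑ m ∈ K R, μ (box R m)) ≠ ⊤ := by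
    exact (ENNReal.sum_lt_top.mpr fun m _ => measure_lt_top μ _).ne
  calc (1:ℝ) = (1:ℝ≥0∞).toReal := by simp
    _ ≤ (∑ m ∈ K R, μ (box R m)).toReal := ENNReal.toReal_le_toReal (by simp) h5 |>.mpr h3
    _ = _ := h4

lemma exists_box_big {μ : Measure ℝ} [IsProbabilityMeasure μ]
    (hsupp : μ (Set.Icc (0 : ℝ) 1)ᶜ = 0) {R : ℝ} (hR : 0 < R) (hR1 : R ≤ 1) :
    ∃ m, R / 3 ≤ (μ (box R m)).toReal := by
  have hne : (K R).Nonempty := by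
    refine ⟨-1, ?_⟩
    simp only [K, Finset.mem_Icc]
    exact ⟨le_refl _, Int.floor_nonneg.mpr (by positivity) |>.trans' (by omega)⟩
  have hcardpos : (0:ℝ) < (K R).card := by
    exact_mod_cast Finset.card_pos.mpr hne
  have hsum := one_le_sum_box hsupp hR hR1
  have : ∑ m ∈ K R, (1 / ((K R).card : ℝ)) ≤ ∑ m ∈ K R, (μ (box R m)).toReal := by
    rw [Finset.sum_const]
    rw [nsmul_eq_mul]
    rw [mul_one_div, div_self hcardpos.ne']
    exact hsum
  obtain ⟨m, -, hm⟩ := Finset.exists_le_of_sum_le hne this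
  refine ⟨m, le_trans ?_ hm⟩
  rw [div_le_div_iff₀ (by norm_num) hcardpos]
  have := cardK_le hR hR1
  calc R * (K R).card ≤ R * (3 / R) := by
        apply mul_le_mul_of_nonneg_left this hR.le
    _ = 3 := by field_simp
    _ = 1 * 3 := by ring

lemma enlarge_zero (s t : ℝ) : enlarge 0 s t = Set.Icc s t := by
  simp [enlarge]

lemma gridSum_zero_lower {μ : Measure ℝ} [IsProbabilityMeasure μ]
    (hsupp : μ (Set.Icc (0 : ℝ) 1)ᶜ = 0) {q : ℝ} (hq : 0 ≤ q)
    {R : ℝ} (hR : 0 < R) (hR1 : R ≤ 1) : (R/3) ^ q ≤ gridSum μ 0 q R := by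
  obtain ⟨m, hm⟩ := exists_box_big hsupp hR hR1
  have hpos : 0 < μ (box R m) := by
    by_contra h
    push_neg at h
    have : μ (box R m) = 0 := le_antisymm h zero_le
    rw [this] at hm
    simp at hm
    nlinarith
  have hterm : (R/3) ^ q ≤ term μ 0 q R m := by
    rw [term, if_pos hpos]
    have : enlarge 0 ((m:ℝ)*R) (((m:ℝ)+1)*R) = box R m := enlarge_zero _ _
    rw [this]
    exact Real.rpow_le_rpow (by positivity) hm hq
  exact hterm.trans (Summable.le_tsum (summable_term hsupp hR 0 q) m fun n _ => term_nonneg μ 0 q R n)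

lemma gridSum_pos {μ : Measure ℝ} [IsProbabilityMeasure μ]
    (hsupp : μ (Set.Icc (0 : ℝ) 1)ᶜ = 0) {q : ℝ} (hq : 0 ≤ q)
    {R : ℝ} (hR : 0 < R) (hR1 : R ≤ 1) : 0 < gridSum μ 0 q R :=
  lt_of_lt_of_le (Real.rpow_pos_of_pos (by positivity) q) (gridSum_zero_lower hsupp hq hR hR1)

lemma box_subset_enlarge {a R : ℝ} (ha : 0 ≤ a) (hR : 0 ≤ R) (m : ℤ) :
    box R m ⊆ enlarge a ((m:ℝ)*R) (((m:ℝ)+1)*R) := by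
  apply Set.Icc_subset_Icc
  · have : 0 ≤ a * (((m:ℝ)+1)*R - (m:ℝ)*R) / 2 := by
      have : ((m:ℝ)+1)*R - (m:ℝ)*R = R := by ring
      rw [this]; positivity
    linarith
  · have : 0 ≤ a * (((m:ℝ)+1)*R - (m:ℝ)*R) / 2 := by
      have : ((m:ℝ)+1)*R - (m:ℝ)*R = R := by ring
      rw [this]; positivity
    linarith

lemma gridSum_zero_le {μ : Measure ℝ} [IsProbabilityMeasure μ]
    (hsupp : μ (Set.Icc (0 : ℝ) 1)ᶜ = 0) {q a : ℝ} (hq : 0 ≤ q) (ha : 0 ≤ a)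
    {R : ℝ} (hR : 0 < R) : gridSum μ 0 q R ≤ gridSum μ a q R := by
  apply Summable.tsum_le_tsum _ (summable_term hsupp hR 0 q) (summable_term hsupp hR a q)
  intro m
  unfold term
  split
  · apply Real.rpow_le_rpow ENNReal.toReal_nonneg _ hq
    apply ENNReal.toReal_le_toReal (measure_ne_top μ _) (measure_ne_top μ _) |>.mpr
    rw [enlarge_zero]
    exact measure_mono (box_subset_enlarge ha hR.le m)
  · exact le_rfl


def J (a : ℝ) : Finset ℤ := Finset.Icc (-(⌈a⌉₊:ℤ)) (⌈a⌉₊:ℤ)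

lemma cardJ (a : ℝ) : ((J a).card : ℤ) = 2*(⌈a⌉₊:ℤ) + 1 := by
  simp only [J, Int.card_Icc]
  omega

lemma enlarge_subset_biUnion {a : ℝ} (ha : 0 ≤ a) {R : ℝ} (hR : 0 < R) (m : ℤ) :
    enlarge a ((m:ℝ)*R) (((m:ℝ)+1)*R) ⊆ ⋃ j ∈ J a, box R (m + j) := by
  set k : ℤ := (⌈a⌉₊:ℤ) with hk
  have hk0 : 0 ≤ k := by positivity
  have hak : a ≤ (k:ℝ) := by
    rw [hk]; exact_mod_cast Nat.le_ceil a
  intro x hx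
  simp only [enlarge, Set.mem_Icc] at hx
  have hRR : ((m:ℝ)+1)*R - (m:ℝ)*R = R := by ring
  rw [hRR] at hx
  have hx1 : ((m:ℝ) - k) * R ≤ x := by
    have : a * R / 2 ≤ (k:ℝ) * R := by
      have h1 : a * R ≤ (k:ℝ) * R := mul_le_mul_of_nonneg_right hak hR.le
      nlinarith
    nlinarith [hx.1]
  have hx2 : x ≤ ((m:ℝ) + 1 + k) * R := by
    have : a * R / 2 ≤ (k:ℝ) * R := by
      have h1 : a * R ≤ (k:ℝ) * R := mul_le_mul_of_nonneg_right hak hR.le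
      nlinarith
    nlinarith [hx.2]
  set j : ℤ := min (⌊x/R⌋ - m) k with hj
  have hfl : m - k ≤ ⌊x/R⌋ := by
    rw [Int.le_floor]
    push_cast
    rw [le_div_iff₀ hR]
    push_cast at hx1
    linarith
  have hjmem : j ∈ J a := by
    simp only [J, Finset.mem_Icc, ← hk]
    constructor
    · apply le_min (by omega) (by omega)
    · exact min_le_right _ _
  refine Set.mem_biUnion hjmem ?_
  simp only [box, Set.mem_Icc]
  have hfloorle : ((⌊x/R⌋:ℝ)) * R ≤ x := by
    have h := Int.floor_le (x/R)
    calc ((⌊x/R⌋:ℝ)) * R ≤ (x/R) * R := mul_le_mul_of_nonneg_right h hR.le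
      _ = x := by field_simp
  rcases le_or_gt (⌊x/R⌋ - m) k with hc | hc
  · have hjeq : j = ⌊x/R⌋ - m := min_eq_left hc
    have hmj : m + j = ⌊x/R⌋ := by rw [hjeq]; ring
    rw [hmj]
    refine ⟨hfloorle, ?_⟩
    have h := (Int.lt_floor_add_one (x/R)).le
    calc x = (x/R) * R := by field_simp
      _ ≤ ((⌊x/R⌋:ℝ) + 1) * R := mul_le_mul_of_nonneg_right h hR.le
  · have hjeq : j = k := min_eq_right hc.le
    rw [hjeq]
    constructor
    · have h1 : ((m + k : ℤ) : ℝ) ≤ (⌊x/R⌋:ℝ) := by exact_mod_cast (by omega : m + k ≤ ⌊x/R⌋)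
      calc ((m + k : ℤ) : ℝ) * R ≤ ((⌊x/R⌋:ℝ)) * R := mul_le_mul_of_nonneg_right h1 hR.le
        _ ≤ x := hfloorle
    · push_cast
      push_cast at hx2
      linarith


lemma term_zero_eq {μ : Measure ℝ} {q : ℝ} (hq : 0 < q) (R : ℝ) (n : ℤ) :
    term μ 0 q R n = (μ (box R n)).toReal ^ q := by
  unfold term
  rw [enlarge_zero]
  split
  · rfl
  · rename_i h
    push_neg at h
    have : μ (box R n) = 0 := le_antisymm h zero_le
    rw [this]
    simp [Real.zero_rpow hq.ne']

lemma term_a_le {μ : Measure ℝ} [IsProbabilityMeasure μ] {q a : ℝ} (hq : 0 < q) (ha : 0 ≤ a)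
    {R : ℝ} (hR : 0 < R) (m : ℤ) :
    term μ a q R m ≤ (((J a).card : ℝ)) ^ q *
      ∑ j ∈ J a, (μ (box R (m + j))).toReal ^ q := by
  have hJne : (J a).Nonempty := ⟨0, by simp [J]⟩
  have hsum_nonneg : 0 ≤ ∑ j ∈ J a, (μ (box R (m + j))).toReal ^ q :=
    Finset.sum_nonneg fun j _ => Real.rpow_nonneg ENNReal.toReal_nonneg q
  unfold term
  split
  · obtain ⟨j0, hj0mem, hj0⟩ := (J a).exists_max_image (fun j => (μ (box R (m + j))).toReal) hJne
    have h1 : (μ (enlarge a ((m:ℝ)*R) (((m:ℝ)+1)*R))).toReal ≤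
        ∑ j ∈ J a, (μ (box R (m + j))).toReal := by
      have hmono : μ (enlarge a ((m:ℝ)*R) (((m:ℝ)+1)*R)) ≤ ∑ j ∈ J a, μ (box R (m + j)) :=
        le_trans (measure_mono (enlarge_subset_biUnion ha hR m)) (measure_biUnion_finset_le _ _)
      have hfin : (∑ j ∈ J a, μ (box R (m + j))) ≠ ⊤ :=
        (ENNReal.sum_lt_top.mpr fun j _ => measure_lt_top μ _).ne
      calc (μ (enlarge a ((m:ℝ)*R) (((m:ℝ)+1)*R))).toReal
          ≤ (∑ j ∈ J a, μ (box R (m + j))).toReal :=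
            (ENNReal.toReal_le_toReal (measure_ne_top μ _) hfin).mpr hmono
        _ = _ := ENNReal.toReal_sum fun j _ => measure_ne_top μ _
    have h2 : ∑ j ∈ J a, (μ (box R (m + j))).toReal ≤
        ((J a).card : ℝ) * (μ (box R (m + j0))).toReal := by
      have := Finset.sum_le_card_nsmul (J a) (fun j => (μ (box R (m + j))).toReal)
        ((μ (box R (m + j0))).toReal) (fun j hj => hj0 j hj)
      simpa [nsmul_eq_mul] using this
    have h3 : (μ (enlarge a ((m:ℝ)*R) (((m:ℝ)+1)*R))).toReal ^ q ≤
        (((J a).card : ℝ) * (μ (box R (m + j0))).toReal) ^ q :=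
      Real.rpow_le_rpow ENNReal.toReal_nonneg (h1.trans h2) hq.le
    have h4 : (((J a).card : ℝ) * (μ (box R (m + j0))).toReal) ^ q =
        ((J a).card : ℝ) ^ q * (μ (box R (m + j0))).toReal ^ q :=
      Real.mul_rpow (by positivity) ENNReal.toReal_nonneg
    have h5 : (μ (box R (m + j0))).toReal ^ q ≤ ∑ j ∈ J a, (μ (box R (m + j))).toReal ^ q :=
      Finset.single_le_sum (f := fun j => (μ (box R (m + j))).toReal ^ q)
        (fun j _ => Real.rpow_nonneg ENNReal.toReal_nonneg q) hj0mem
    calc (μ (enlarge a ((m:ℝ)*R) (((m:ℝ)+1)*R))).toReal ^ q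
        ≤ ((J a).card : ℝ) ^ q * (μ (box R (m + j0))).toReal ^ q := by rw [← h4]; exact h3
      _ ≤ _ := by
          apply mul_le_mul_of_nonneg_left h5 (by positivity)
  · positivity

lemma gridSum_a_le {μ : Measure ℝ} [IsProbabilityMeasure μ]
    (hsupp : μ (Set.Icc (0 : ℝ) 1)ᶜ = 0) {q a : ℝ} (hq : 0 ≤ q) (ha : 0 ≤ a) :
    ∃ C : ℝ, 0 < C ∧ ∀ R, 0 < R → gridSum μ a q R ≤ C * gridSum μ 0 q R := by
  have hJcardpos : (0:ℝ) < ((J a).card : ℝ) := by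
    have : (0:ℤ) < ((J a).card : ℤ) := by rw [cardJ]; positivity
    exact_mod_cast this
  rcases eq_or_lt_of_le hq with h0 | hq
  · refine ⟨1, one_pos, fun R hR => ?_⟩
    rw [one_mul]
    apply le_of_eq
    apply tsum_congr
    intro m
    rw [← h0]
    simp [Real.rpow_zero]
  · refine ⟨((J a).card : ℝ) ^ q * ((J a).card : ℝ), by positivity, fun R hR => ?_⟩
    set g : ℤ → ℝ := fun n => (μ (box R n)).toReal ^ q with hg
    have hgsummable : Summable g := by
      have := summable_term hsupp hR 0 q
      apply this.congr
      intro n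
      rw [term_zero_eq hq]
    have hgsummable' : ∀ j ∈ J a, Summable (fun m => g (m + j)) := by
      intro j _
      exact ((Equiv.addRight j).summable_iff (f := g)).mpr hgsummable
    have hsummable2 : Summable (fun m => ((J a).card : ℝ) ^ q * ∑ j ∈ J a, g (m + j)) := by
      apply Summable.mul_left
      exact summable_sum hgsummable'
    have step1 : gridSum μ a q R ≤ ∑' m, ((J a).card : ℝ) ^ q * ∑ j ∈ J a, g (m + j) := by
      apply Summable.tsum_le_tsum _ (summable_term hsupp hR a q) hsummable2
      intro m
      exact term_a_le hq ha hR m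
    have step2 : ∑' m, ((J a).card : ℝ) ^ q * ∑ j ∈ J a, g (m + j) =
        ((J a).card : ℝ) ^ q * ∑ j ∈ J a, ∑' m, g (m + j) := by
      rw [tsum_mul_left]
      congr 1
      exact Summable.tsum_finsetSum hgsummable'
    have step3 : ∀ j ∈ J a, ∑' m, g (m + j) = gridSum μ 0 q R := by
      intro j _
      have : ∑' m, g (m + j) = ∑' m, g m := (Equiv.addRight j).tsum_eq g
      rw [this, gridSum_eq_tsum]
      exact tsum_congr fun n => (term_zero_eq hq R n).symm
    have step4 : ∑ j ∈ J a, ∑' m, g (m + j) = ((J a).card : ℝ) * gridSum μ 0 q R := by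
      rw [Finset.sum_congr rfl step3, Finset.sum_const, nsmul_eq_mul]
    calc gridSum μ a q R ≤ ((J a).card : ℝ) ^ q * ∑ j ∈ J a, ∑' m, g (m + j) := by
          rw [← step2]; exact step1
      _ = ((J a).card : ℝ) ^ q * ((J a).card : ℝ) * gridSum μ 0 q R := by
          rw [step4]; ring


lemma tendsto_rpow_zero {c : ℝ} (hc : 0 < c) :
    Tendsto (fun R : ℝ => R ^ c) (nhdsWithin 0 (Set.Ioi 0)) (nhds 0) := by
  have h1 : Tendsto (fun R : ℝ => Real.exp (Real.log R * c)) (nhdsWithin 0 (Set.Ioi 0)) (nhds 0) := by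
    apply Real.tendsto_exp_atBot.comp
    rw [show (fun R : ℝ => Real.log R * c) = (fun R : ℝ => c * Real.log R) by
      funext R; ring]
    exact (tendsto_const_mul_atBot_of_pos hc).mpr Real.tendsto_log_nhdsGT_zero
  apply h1.congr'
  filter_upwards [self_mem_nhdsWithin] with R hR
  rw [Real.rpow_def_of_pos hR]

lemma small_mem : Set.Ioo (0:ℝ) (1/3) ∈ nhdsWithin (0:ℝ) (Set.Ioi 0) :=
  Ioo_mem_nhdsGT_of_mem ⟨le_refl 0, by norm_num⟩

section main

variable {μ : Measure ℝ} [IsProbabilityMeasure μ]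
  (hsupp : μ (Set.Icc (0 : ℝ) 1)ᶜ = 0) {q : ℝ} (hq : 0 ≤ q)

include hsupp hq in
lemma ratio_bounds :
    ∀ᶠ R in nhdsWithin (0:ℝ) (Set.Ioi 0),
      -(2*q) ≤ Real.log (gridSum μ 0 q R) / (-Real.log R) ∧
        Real.log (gridSum μ 0 q R) / (-Real.log R) ≤ 2 := by
  filter_upwards [small_mem] with R hR
  obtain ⟨hR0, hR3⟩ := hR
  have hR1 : R ≤ 1 := by linarith
  have hlogR : Real.log R < 0 := Real.log_neg hR0 (by linarith)
  have hnlog : 0 < -Real.log R := by linarith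
  have hlog3 : Real.log 3 ≤ -Real.log R := by
    have h1 : Real.log R ≤ Real.log (1/3) := Real.log_le_log hR0 hR3.le
    have h2 : Real.log ((1:ℝ)/3) = -Real.log 3 := by
      rw [one_div, Real.log_inv]
    linarith
  have hS0pos : 0 < gridSum μ 0 q R := gridSum_pos hsupp hq hR0 hR1
  have hS0le : gridSum μ 0 q R ≤ 3 / R := gridSum_le hsupp hq 0 hR0 hR1
  have hS0ge : (R/3) ^ q ≤ gridSum μ 0 q R := gridSum_zero_lower hsupp hq hR0 hR1
  constructor
  · rw [le_div_iff₀ hnlog]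
    have h1 : Real.log ((R/3) ^ q) ≤ Real.log (gridSum μ 0 q R) :=
      Real.log_le_log (Real.rpow_pos_of_pos (by positivity) q) hS0ge
    have h2 : Real.log ((R/3) ^ q) = q * (Real.log R - Real.log 3) := by
      rw [Real.log_rpow (by positivity), Real.log_div hR0.ne' (by norm_num)]
    have h3 : q * (Real.log R - Real.log 3) ≥ q * (2 * Real.log R) := by
      apply mul_le_mul_of_nonneg_left _ hq
      linarith
    nlinarith
  · rw [div_le_iff₀ hnlog]
    have h1 : Real.log (gridSum μ 0 q R) ≤ Real.log (3/R) :=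
      Real.log_le_log hS0pos hS0le
    have h2 : Real.log ((3:ℝ)/R) = Real.log 3 - Real.log R := by
      rw [Real.log_div (by norm_num) hR0.ne']
    linarith

include hsupp hq in
lemma two_mem {a : ℝ} (ha : 0 ≤ a) :
    Tendsto (fun R : ℝ => R ^ (2:ℝ) * gridSum μ a q R)
      (nhdsWithin 0 (Set.Ioi 0)) (nhds 0) := by
  have h3R : Tendsto (fun R : ℝ => 3 * R ^ (1:ℝ)) (nhdsWithin 0 (Set.Ioi 0)) (nhds 0) := by
    have := (tendsto_rpow_zero one_pos).const_mul (3:ℝ)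
    simpa using this
  apply squeeze_zero' _ _ h3R
  · filter_upwards [self_mem_nhdsWithin] with R hR
    have h0 : (0:ℝ) < R := hR
    exact mul_nonneg (Real.rpow_nonneg h0.le _) (gridSum_nonneg μ a q R)
  · filter_upwards [small_mem] with R hR
    obtain ⟨hR0, hR3⟩ := hR
    have hR1 : R ≤ 1 := by linarith
    have h1 : gridSum μ a q R ≤ 3 / R := gridSum_le hsupp hq a hR0 hR1
    have h2 : R ^ (2:ℝ) * gridSum μ a q R ≤ R ^ (2:ℝ) * (3/R) := by
      apply mul_le_mul_of_nonneg_left h1 (Real.rpow_nonneg hR0.le _)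
    have h3 : R ^ (2:ℝ) * (3/R) = 3 * R ^ (1:ℝ) := by
      rw [show (2:ℝ) = (1:ℝ) + 1 by norm_num, Real.rpow_add hR0, Real.rpow_one]
      field_simp
    linarith

end main

end Stmt6Aux

/-- for `q ≥ 0` and any `a ≥ 0`, the moment function `β_a(q)` defined via
enlarged grid intervals coincides with the usual coarse moment function
`β₀(q) = limsup_{r→0⁺} log(Σ_{B ∈ B_r^*} μ(B)^q)/(-log r)`. -/
theorem stmt_6 (μ : Measure ℝ) [IsProbabilityMeasure μ] [NullSingletonClass μ]
    (hsupp : μ (Set.Icc (0 : ℝ) 1)ᶜ = 0)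
    (q a : ℝ) (hq : 0 ≤ q) (ha : 0 ≤ a) :
    betaA μ a q =
      Filter.limsup (fun R : ℝ => Real.log (gridSum μ 0 q R) / (-Real.log R))
        (nhdsWithin 0 (Set.Ioi 0)) := by
  classical
  set l := nhdsWithin (0:ℝ) (Set.Ioi 0) with hl
  set ratio : ℝ → ℝ := fun R => Real.log (gridSum μ 0 q R) / (-Real.log R) with hratio
  set L := Filter.limsup ratio l with hLdef
  set E : Set ℝ := {β : ℝ | Filter.Tendsto (fun R => R ^ β * gridSum μ a q R)
    (nhdsWithin 0 (Set.Ioi 0)) (nhds 0)} with hE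
  have hbeta : betaA μ a q = sInf E := rfl
  have hbounds := Stmt6Aux.ratio_bounds (μ := μ) hsupp hq
  have hbddAbove : Filter.IsBoundedUnder (· ≤ ·) l ratio :=
    Filter.isBoundedUnder_of_eventually_le (hbounds.mono fun R h => h.2)
  have hcobdd : Filter.IsCoboundedUnder (· ≤ ·) l ratio :=
    Filter.isCoboundedUnder_le_of_eventually_le l (hbounds.mono fun R h => h.1)
  have h2E : (2:ℝ) ∈ E := Stmt6Aux.two_mem hsupp hq ha
  have hlower : ∀ β ∈ E, L ≤ β := by
    intro β hβ
    apply Filter.limsup_le_of_le hcobdd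
    have h1 : ∀ᶠ R in l, R ^ β * gridSum μ a q R < 1 := by
      exact hβ.eventually_lt_const one_pos
    filter_upwards [h1, Stmt6Aux.small_mem] with R hR1 hR2
    obtain ⟨hR0, hR3⟩ := hR2
    have hR1' : R ≤ 1 := by linarith
    have hS0pos := Stmt6Aux.gridSum_pos hsupp hq hR0 hR1'
    have hSa := Stmt6Aux.gridSum_zero_le hsupp hq ha hR0
    have hrpow : (0:ℝ) < R ^ β := Real.rpow_pos_of_pos hR0 β
    have h2 : R ^ β * gridSum μ 0 q R < 1 :=
      lt_of_le_of_lt (mul_le_mul_of_nonneg_left hSa hrpow.le) hR1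
    have h3 : gridSum μ 0 q R < 1 / R ^ β := by
      rw [lt_div_iff₀ hrpow]
      nlinarith
    have h4 : Real.log (gridSum μ 0 q R) ≤ β * (-Real.log R) := by
      have hle := Real.log_le_log hS0pos h3.le
      rw [one_div, Real.log_inv, Real.log_rpow hR0] at hle
      linarith
    have hlogR : Real.log R < 0 := Real.log_neg hR0 (by linarith)
    show Real.log (gridSum μ 0 q R) / (-Real.log R) ≤ β
    rw [div_le_iff₀ (by linarith : (0:ℝ) < -Real.log R)]
    linarith
  have hupper : ∀ β : ℝ, L < β → β ∈ E := by
    intro β hβ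
    obtain ⟨C, hC, hCineq⟩ := Stmt6Aux.gridSum_a_le hsupp hq ha
    set β' := (L + β)/2 with hβ'def
    have hLβ' : L < β' := by rw [hβ'def]; linarith
    have hβ'β : 0 < β - β' := by rw [hβ'def]; linarith
    have hev : ∀ᶠ R in l, ratio R < β' :=
      Filter.eventually_lt_of_limsup_lt hLβ' hbddAbove
    have htend : Filter.Tendsto (fun R : ℝ => C * R ^ (β - β')) l (nhds 0) := by
      have h := (Stmt6Aux.tendsto_rpow_zero hβ'β).const_mul C
      rw [hl]
      simpa using h
    rw [hE]
    simp only [Set.mem_setOf_eq]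
    rw [← hl]
    apply squeeze_zero' _ _ htend
    · filter_upwards [self_mem_nhdsWithin] with R hR
      exact mul_nonneg (Real.rpow_nonneg (le_of_lt hR) _) (Stmt6Aux.gridSum_nonneg μ a q R)
    · filter_upwards [hev, Stmt6Aux.small_mem] with R hR1 hR2
      obtain ⟨hR0, hR3⟩ := hR2
      have hR1' : R ≤ 1 := by linarith
      have hS0pos := Stmt6Aux.gridSum_pos hsupp hq hR0 hR1'
      have hlogR : Real.log R < 0 := Real.log_neg hR0 (by linarith)
      have hnlog : (0:ℝ) < -Real.log R := by linarith
      have h1 : Real.log (gridSum μ 0 q R) < β' * (-Real.log R) := by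
        have := (div_lt_iff₀ hnlog).mp hR1
        linarith
      have h2 : gridSum μ 0 q R < R ^ (-β') := by
        have hrpos : (0:ℝ) < R ^ (-β') := Real.rpow_pos_of_pos hR0 _
        rw [← Real.exp_log hS0pos, ← Real.exp_log hrpos]
        apply Real.exp_lt_exp.mpr
        rw [Real.log_rpow hR0]
        linarith
      have hrpowβ : (0:ℝ) < R ^ β := Real.rpow_pos_of_pos hR0 β
      have h3 : R ^ β * gridSum μ a q R ≤ R ^ β * (C * gridSum μ 0 q R) :=
        mul_le_mul_of_nonneg_left (hCineq R hR0) hrpowβ.le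
      have h4 : R ^ β * gridSum μ 0 q R ≤ R ^ β * R ^ (-β') :=
        mul_le_mul_of_nonneg_left h2.le hrpowβ.le
      have h5 : R ^ β * R ^ (-β') = R ^ (β - β') := by
        rw [← Real.rpow_add hR0]; ring_nf
      calc R ^ β * gridSum μ a q R ≤ R ^ β * (C * gridSum μ 0 q R) := h3
        _ = C * (R ^ β * gridSum μ 0 q R) := by ring
        _ ≤ C * (R ^ β * R ^ (-β')) := mul_le_mul_of_nonneg_left h4 hC.le
        _ = C * R ^ (β - β') := by rw [h5]
  have hEbddBelow : BddBelow E := ⟨L, fun β hβ => hlower β hβ⟩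
  have hEne : E.Nonempty := ⟨2, h2E⟩
  have hle1 : L ≤ sInf E := le_csInf hEne hlower
  have hle2 : sInf E ≤ L := by
    by_contra h
    push_neg at h
    have h1 : L < (L + sInf E)/2 := by linarith
    have h2 : (L + sInf E)/2 ∈ E := hupper _ h1
    have := csInf_le hEbddBelow h2
    linarith
  rw [hbeta]
  exact le_antisymm hle2 hle1
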